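/- Every unitary skew-symmetric complex matrix U ∈ M_n(ℂ) (U unitary, U^T = -U) exists only for n even, and can be written U = W Ω_n W^T for some unitary W ∈ M_n(ℂ), where Ω_n is the standard symplectic matrix. -/

import Mathlib

open Module

local notation "⟪" x ", " y "⟫" => @inner ℂ _ _ x y

lemma quat_aux (m : ℕ) : ∀ (E : Type) [NormedAddCommGroup E] [InnerProductSpace ℂ E]
    [FiniteDimensional ℂ E] (J : E → E)
    (_ : ∀ x y, J (x + y) = J x + J y)
    (_ : ∀ (c : ℂ) (x : E), J (c • x) = (starRingEnd ℂ) c • J x)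
    (_ : ∀ x, J (J x) = -x)
    (_ : ∀ x y, ⟪J x, J y⟫ = ⟪y, x⟫)
    (_ : finrank ℂ E = m),
    ∃ (k : ℕ) (v : Fin k ⊕ Fin k → E), m = k + k ∧ Orthonormal ℂ v ∧
      ∀ i, v (Sum.inr i) = J (v (Sum.inl i)) := by
  induction m using Nat.strong_induction_on with
  | _ m IH =>
    intro E _ _ _ J hadd hsmul hJJ hinner hrank
    rcases Nat.eq_zero_or_pos m with hm | hm
    · refine ⟨0, fun p => p.elim Fin.elim0 Fin.elim0, by omega,
        ⟨fun i => i.elim Fin.elim0 Fin.elim0, fun i => i.elim Fin.elim0 Fin.elim0⟩, ?_⟩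
      exact fun i => i.elim0
    · -- get a unit vector
      have : Nontrivial E := Module.nontrivial_of_finrank_pos (R := ℂ) (hrank ▸ hm)
      obtain ⟨x, hx⟩ := exists_ne (0 : E)
      set v₀ : E := (‖x‖ : ℂ)⁻¹ • x with hv₀
      have hnx : (‖x‖ : ℂ) ≠ 0 := by
        simpa using norm_ne_zero_iff.mpr hx
      have hnv₀ : ‖v₀‖ = 1 := by
        rw [hv₀, norm_smul]
        simp [norm_inv, inv_mul_cancel₀ (norm_ne_zero_iff.mpr hx)]
      have h11 : ⟪v₀, v₀⟫ = 1 := by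
        rw [inner_self_eq_norm_sq_to_K, hnv₀]; norm_num
      have h22 : ⟪J v₀, J v₀⟫ = 1 := by rw [hinner, h11]
      have hnJ : ‖J v₀‖ = 1 := by
        have h' := inner_self_eq_norm_sq (𝕜 := ℂ) (J v₀)
        rw [h22, RCLike.one_re] at h'
        nlinarith [norm_nonneg (J v₀)]
      have h12 : ⟪v₀, J v₀⟫ = 0 := by
        have := hinner (J v₀) v₀
        rw [hJJ, inner_neg_left] at this
        have h2 : (2 : ℂ) * ⟪v₀, J v₀⟫ = 0 := by linear_combination - this
        have := mul_eq_zero.mp h2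
        simpa using this
      have h21 : ⟪J v₀, v₀⟫ = 0 := by
        rw [← inner_conj_symm, h12, map_zero]
      -- the pair is orthonormal
      have horth2 : Orthonormal ℂ ![v₀, J v₀] := by
        rw [orthonormal_iff_ite]
        intro i j
        fin_cases i <;> fin_cases j <;>
          simp [h11, h12, h21, h22, hnJ, hnv₀]
      set K : Submodule ℂ E := Submodule.span ℂ (Set.range ![v₀, J v₀]) with hK
      have hrankK : finrank ℂ K = 2 := by
        rw [finrank_span_eq_card horth2.linearIndependent]
        simp
      set S := Kᗮ with hS
      have hrankS : 2 + finrank ℂ S = m := by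
        rw [← hrank, ← Submodule.finrank_add_finrank_orthogonal K, hrankK]
      -- membership facts for S
      have hSv₀ : ∀ y ∈ S, ⟪v₀, (y : E)⟫ = 0 := by
        intro y hy
        exact (Submodule.mem_orthogonal K y).mp hy v₀
          (Submodule.subset_span ⟨0, rfl⟩)
      have hSJv₀ : ∀ y ∈ S, ⟪J v₀, (y : E)⟫ = 0 := by
        intro y hy
        exact (Submodule.mem_orthogonal K y).mp hy (J v₀)
          (Submodule.subset_span ⟨1, rfl⟩)
      -- J maps S to S
      have hmaps : ∀ y ∈ S, J y ∈ S := by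
        intro y hy
        rw [hS, Submodule.mem_orthogonal]
        intro u hu
        induction hu using Submodule.span_induction with
        | mem u hu =>
          obtain ⟨i, rfl⟩ := hu
          fin_cases i
          · show ⟪v₀, J y⟫ = 0
            have h1 : ⟪J (J v₀), J y⟫ = ⟪y, J v₀⟫ := hinner _ _
            rw [hJJ, inner_neg_left] at h1
            have h2 : ⟪y, J v₀⟫ = 0 := by
              rw [← inner_conj_symm, hSJv₀ y hy, map_zero]
            rw [← neg_eq_zero, h1, h2]
          · show ⟪J v₀, J y⟫ = 0
            rw [hinner, ← inner_conj_symm, hSv₀ y hy, map_zero]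
        | zero => simp
        | add u w _ _ hu hw => rw [inner_add_left, hu, hw, add_zero]
        | smul c u _ hu => rw [inner_smul_left, hu, mul_zero]
      -- restricted map
      set J' : S → S := fun y => ⟨J y, hmaps y y.2⟩ with hJ'
      obtain ⟨k', w, hkk', horthw, hw⟩ := IH (finrank ℂ S) (by omega) S J'
        (fun a b => Subtype.ext (hadd a b))
        (fun c a => Subtype.ext (hsmul c a))
        (fun a => Subtype.ext (hJJ a))
        (fun a b => hinner a b) rfl
      -- combine
      refine ⟨k' + 1,
        Sum.elim (Fin.cons v₀ fun i => (w (Sum.inl i) : E))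
                 (Fin.cons (J v₀) fun i => (w (Sum.inr i) : E)), by omega, ?_, ?_⟩
      · rw [orthonormal_iff_ite]
        have hww : ∀ p q, ⟪(w p : E), (w q : E)⟫ = if p = q then 1 else 0 := by
          intro p q
          have := orthonormal_iff_ite.mp horthw p q
          rwa [Submodule.coe_inner] at this
        have hsw : ∀ p, ⟪v₀, (w p : E)⟫ = 0 ∧ ⟪J v₀, (w p : E)⟫ = 0 ∧
            ⟪(w p : E), v₀⟫ = 0 ∧ ⟪(w p : E), J v₀⟫ = 0 := by
          intro p
          refine ⟨hSv₀ _ (w p).2, hSJv₀ _ (w p).2, ?_, ?_⟩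
          · rw [← inner_conj_symm, hSv₀ _ (w p).2, map_zero]
          · rw [← inner_conj_symm, hSJv₀ _ (w p).2, map_zero]
        rintro (i | i) (j | j) <;>
          induction i using Fin.cases <;> induction j using Fin.cases <;>
          simp [h11, h12, h21, h22, hnJ, hnv₀, hww, hsw, Fin.succ_injective,
            (Fin.succ_injective _).eq_iff, Fin.succ_ne_zero, (Fin.succ_ne_zero _).symm]
      · intro i
        induction i using Fin.cases with
        | zero => simp
        | succ i =>
          have := hw i
          simp only [Sum.elim_inr, Sum.elim_inl, Fin.cons_succ]
          rw [this]

open Matrix Module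

/-- a unitary skew-symmetric complex matrix U ∈ M_n(ℂ) exists only for n
even (n = k + k), and then U = W Ω_n Wᵀ for some unitary W, where Ω_n is the standard
symplectic matrix (transported to `Fin n` along n = k + k). -/
theorem stmt_3 (n : ℕ) (U : Matrix (Fin n) (Fin n) ℂ)
    (hU : U ∈ Matrix.unitaryGroup (Fin n) ℂ) (hskew : Uᵀ = -U) :
    ∃ (k : ℕ) (h : n = k + k) (W : Matrix (Fin n) (Fin n) ℂ),
      W ∈ Matrix.unitaryGroup (Fin n) ℂ ∧
      U = W * (Matrix.reindex (finSumFinEquiv.trans (finCongr h.symm))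
            (finSumFinEquiv.trans (finCongr h.symm))
            (Matrix.fromBlocks 0 (-(1 : Matrix (Fin k) (Fin k) ℂ)) 1 0)) * Wᵀ := by
  -- basic matrix identities
  have hsU : star U = Uᴴ := rfl
  have hH : Uᴴ = -(U.map star) := by
    ext i j
    simp only [Matrix.conjTranspose_apply, Matrix.map_apply, Matrix.neg_apply]
    rw [show U j i = Uᵀ i j from rfl, hskew]
    simp
  have hU1 : U * (U.map star) = -1 := by
    have h := Matrix.mem_unitaryGroup_iff.mp hU
    rw [hsU, hH] at h
    rw [← neg_neg (U * U.map star)]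
    rw [show -(U * U.map star) = U * -(U.map star) by noncomm_ring] 
    rw [h]
  have hU2 : (U.map star)ᵀ * U = 1 := by
    have h := Matrix.mem_unitaryGroup_iff'.mp hU
    rw [hsU] at h
    have : (U.map star)ᵀ = Uᴴ := by
      ext i j; simp [Matrix.conjTranspose_apply, Matrix.map_apply]
    rw [this, h]
  -- the antiunitary map J
  set E := EuclideanSpace ℂ (Fin n) with hE
  set J : E → E := fun x => WithLp.toLp 2 (U.mulVec (star x.ofLp)) with hJdef
  have hstarmul : ∀ x : Fin n → ℂ, star (U *ᵥ star x) = (U.map star) *ᵥ x := by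
    intro x
    funext i
    simp [Matrix.mulVec, dotProduct, Matrix.map_apply, mul_comm]
  have hJJ : ∀ x, J (J x) = -x := by
    intro x
    show WithLp.toLp 2 (U *ᵥ star (U *ᵥ star x.ofLp)) = -x
    rw [hstarmul, Matrix.mulVec_mulVec, hU1]
    ext i
    simp [Matrix.mulVec, dotProduct, Matrix.one_apply, Finset.sum_ite_eq]
    rfl
  have hkey : ∀ x y : Fin n → ℂ, ((U.map star) *ᵥ x) ⬝ᵥ (U *ᵥ y) = x ⬝ᵥ y := by
    intro x y
    rw [dotProduct_comm, dotProduct_mulVec, ← Matrix.mulVec_transpose,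
      Matrix.mulVec_mulVec, hU2, Matrix.one_mulVec, dotProduct_comm]
  have hinner : ∀ x y : E, (inner ℂ (J x) (J y) : ℂ) = inner ℂ y x := by
    intro x y
    rw [PiLp.inner_apply, PiLp.inner_apply]
    simp only [RCLike.inner_apply]
    have : ∑ i, (J y i) * (starRingEnd ℂ) (J x i) = (star (U *ᵥ star x)) ⬝ᵥ (U *ᵥ star y) := by
      simp [dotProduct, hJdef, mul_comm]
    rw [this, hstarmul, hkey]
    simp [dotProduct, mul_comm]
  have hEadd : ∀ (x y : E) (i : Fin n), (x + y) i = x i + y i := fun _ _ _ => rfl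
  have hEsmul : ∀ (c : ℂ) (x : E) (i : Fin n), (c • x) i = c * x i := fun _ _ _ => rfl
  obtain ⟨k, v, hkk, horth, hv⟩ := quat_aux n E J
    (by intro x y
        ext i
        simp only [hJdef, Matrix.mulVec, dotProduct, Pi.star_apply, hEadd,
          star_add, mul_add, Finset.sum_add_distrib])
    (by intro c x
        ext i
        simp only [hJdef, Matrix.mulVec, dotProduct, Pi.star_apply, hEsmul,
          star_mul', starRingEnd_apply, smul_eq_mul, Finset.mul_sum]
        congr 1
        funext j
        ring)
    hJJ hinner (finrank_euclideanSpace_fin)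
  set e : Fin k ⊕ Fin k ≃ Fin n := finSumFinEquiv.trans (finCongr hkk.symm) with he
  set W : Matrix (Fin n) (Fin n) ℂ := Matrix.of fun i c => v (e.symm c) i with hW
  have horthite := orthonormal_iff_ite.mp horth
  have hWmem : W ∈ Matrix.unitaryGroup (Fin n) ℂ := by
    rw [Matrix.mem_unitaryGroup_iff']
    ext c d
    have : (star W * W) c d = ∑ i, (starRingEnd ℂ) (v (e.symm c) i) * v (e.symm d) i := by
      simp [Matrix.mul_apply, Matrix.conjTranspose_apply]; rfl
    rw [this]
    have h2 : ∑ i, (starRingEnd ℂ) (v (e.symm c) i) * v (e.symm d) i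
        = (inner ℂ (v (e.symm c)) (v (e.symm d)) : ℂ) := by
      rw [PiLp.inner_apply]; simp [RCLike.inner_apply, mul_comm]
    rw [h2, horthite]
    simp [Matrix.one_apply]
  refine ⟨k, hkk, W, hWmem, ?_⟩
  have hWW : (star W)ᵀ * Wᵀ = 1 := by
    have h := Matrix.mem_unitaryGroup_iff.mp hWmem
    rw [← Matrix.transpose_mul, h, Matrix.transpose_one]
  have step1 : U = (U * (star W)ᵀ) * Wᵀ := by
    rw [Matrix.mul_assoc, hWW, Matrix.mul_one]
  rw [step1]
  congr 1
  ext i c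
  have hlhs : (U * (star W)ᵀ) i c = J (v (e.symm c)) i := by
    simp [Matrix.mul_apply, Matrix.transpose_apply, Matrix.conjTranspose_apply, hJdef,
      Matrix.mulVec, dotProduct]
    rfl
  rw [hlhs]
  have hrhs : (W * (Matrix.reindex e e
      (Matrix.fromBlocks 0 (-(1 : Matrix (Fin k) (Fin k) ℂ)) 1 0))) i c
      = ∑ p : Fin k ⊕ Fin k, v p i *
        (Matrix.fromBlocks 0 (-(1 : Matrix (Fin k) (Fin k) ℂ)) 1 0) p (e.symm c) := by
    rw [Matrix.mul_apply]
    rw [← Fintype.sum_equiv e _ _ (fun p => ?_)]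
    simp [hW, Matrix.reindex_apply, Matrix.submatrix_apply]
  rw [hrhs]
  rcases hq : e.symm c with j | j
  · rw [Fintype.sum_sum_type]
    simp only [Matrix.fromBlocks_apply₁₁, Matrix.fromBlocks_apply₂₁, Matrix.zero_apply,
      mul_zero, Finset.sum_const_zero, zero_add, Matrix.one_apply]
    rw [← hv j]
    simp [Finset.sum_ite_eq', mul_ite]
  · rw [Fintype.sum_sum_type]
    simp only [Matrix.fromBlocks_apply₁₂, Matrix.fromBlocks_apply₂₂, Matrix.zero_apply,
      mul_zero, Finset.sum_const_zero, add_zero, Matrix.neg_apply, Matrix.one_apply]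
    have : J (v (Sum.inr j)) = -(v (Sum.inl j)) := by rw [hv j, hJJ]
    have hne : (-(v (Sum.inl j)) : E) i = -(v (Sum.inl j) i) := rfl
    rw [this, hne]
    simp [Finset.sum_ite_eq', mul_ite]
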